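/- arXiv:1210.7440 — 5 statements merged into one kernel-verified Lean document; each statement's English description precedes it below -/
import Mathlib

section
/- Let G be a finite group, F an algebraically closed field, π an irreducible F-representation of G, and σ : G → G an anti-involution (a bijection with σ(gh) = σ(h)σ(g) and σ∘σ = id). Suppose v₁, v₂ ∈ π and 0 ≠ φ ∈ π* are such that the matrix coefficient functions g ↦ φ(π(g)vᵢ) are σ-invariant, i.e. φ(π(g)vᵢ) = φ(π(σ(g))vᵢ) for all g ∈ G and i = 1,2. Then v₁ and v₂ are linearly dependent. -/
/-- A representation is irreducible if it is nonzero and the only invariant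
submodules are `⊥` and `⊤`. -/
def Representation.IsIrreducible' {k G V : Type*} [CommSemiring k] [Monoid G]
    [AddCommMonoid V] [Module k V] (π : Representation k G V) : Prop :=
  Nontrivial V ∧ ∀ U : Submodule k V, (∀ g : G, ∀ v ∈ U, π g v ∈ U) → U = ⊥ ∨ U = ⊤

namespace Stmt0Aux

open Representation

variable {G F V : Type*} [Group G] [Field F] [IsAlgClosed F]
  [AddCommGroup V] [Module F V] [FiniteDimensional F V]

/-- The `MonoidAlgebra`-module associated to an irreducible representation is simple. -/
lemma isSimple (π : Representation F G V) (hirr : π.IsIrreducible') :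
    IsSimpleModule (MonoidAlgebra F G) π.asModule := by
  haveI : Nontrivial V := hirr.1
  haveI : Nontrivial π.asModule := hirr.1
  refine { toNontrivial := inferInstance, eq_bot_or_eq_top := ?_ }
  intro p
  let U : Submodule F V :=
    { carrier := {v : V | (show π.asModule from v) ∈ p}
      add_mem' := fun ha hb => p.add_mem ha hb
      zero_mem' := p.zero_mem
      smul_mem' := fun c v hv => by
        have h : (c • v : V) = (algebraMap F (MonoidAlgebra F G) c) • (show π.asModule from v) := by
          show _ = π.asAlgebraHom _ v
          rw [AlgHom.commutes, Module.algebraMap_end_apply]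
        show (c • v : V) ∈ p
        rw [h]
        exact p.smul_mem _ hv }
  have hU : ∀ g : G, ∀ v ∈ U, π g v ∈ U := by
    intro g v hv
    have h : (π g v : V) = (MonoidAlgebra.of F G g) • (show π.asModule from v) := by
      show _ = π.asAlgebraHom _ v
      rw [asAlgebraHom_of]
    show (π g v : V) ∈ p
    rw [h]
    exact p.smul_mem _ hv
  rcases hirr.2 U hU with h | h
  · left
    rw [eq_bot_iff]
    intro x hx
    have : (x : V) ∈ U := hx
    rw [h] at this
    exact (Submodule.mem_bot F).mp this
  · right
    rw [eq_top_iff]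
    intro x _
    have : (x : V) ∈ U := by rw [h]; trivial
    exact this

/-- Schur's lemma: endomorphisms of the associated module are scalar. -/
lemma schur (π : Representation F G V) (hirr : π.IsIrreducible')
    (f : π.asModule →ₗ[MonoidAlgebra F G] π.asModule) :
    ∃ c : F, ∀ x : π.asModule, (f x : V) = c • (x : V) := by
  haveI : Nontrivial V := hirr.1
  let f' : V →ₗ[F] V :=
    { toFun := fun v => f (show π.asModule from v)
      map_add' := fun a b => f.map_add a b
      map_smul' := fun c v => by
        have h : (c • v : V) = (algebraMap F (MonoidAlgebra F G) c) • (show π.asModule from v) := by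
          show _ = π.asAlgebraHom _ v
          rw [AlgHom.commutes, Module.algebraMap_end_apply]
        show f (show π.asModule from (c • v : V)) = c • f (show π.asModule from v)
        calc f (show π.asModule from (c • v : V))
            = f ((algebraMap F (MonoidAlgebra F G) c) • (show π.asModule from v)) := by rw [← h]
          _ = (algebraMap F (MonoidAlgebra F G) c) • f (show π.asModule from v) := f.map_smul _ _
          _ = c • (f (show π.asModule from v) : V) := by
              show π.asAlgebraHom _ _ = _
              rw [AlgHom.commutes]; rfl }
  have hcomm : ∀ (g : G) (v : V), f' (π g v) = π g (f' v) := by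
    intro g v
    have h : ∀ w : V, (π g w : V) = (MonoidAlgebra.of F G g) • (show π.asModule from w) := by
      intro w
      show _ = π.asAlgebraHom _ w
      rw [asAlgebraHom_of]
    show f (show π.asModule from (π g v : V)) = π g (f (show π.asModule from v))
    rw [h v, h (f (show π.asModule from v) : V)]
    exact f.map_smul _ _
  obtain ⟨c, hc⟩ := Module.End.exists_eigenvalue (f' : Module.End F V)
  obtain ⟨v0, hv0⟩ := hc.exists_hasEigenvector
  let K : Submodule F V := Module.End.eigenspace f' c
  have hK : ∀ g : G, ∀ v ∈ K, π g v ∈ K := by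
    intro g v hv
    rw [Module.End.mem_eigenspace_iff] at hv ⊢
    rw [hcomm, hv, map_smul]
  have hKtop : K = ⊤ := by
    rcases hirr.2 K hK with h | h
    · exfalso
      apply hv0.2
      have hm : v0 ∈ K := hv0.1
      rw [h] at hm
      exact (Submodule.mem_bot F).mp hm
    · exact h
  refine ⟨c, fun x => ?_⟩
  have : (id x : V) ∈ K := hKtop ▸ Submodule.mem_top
  have h2 := Module.End.mem_eigenspace_iff.mp this
  exact h2

/-- Burnside's theorem: the image of the group algebra is all of `End V`. -/
lemma burnside (π : Representation F G V) (hirr : π.IsIrreducible') :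
    Function.Surjective ⇑π.asAlgebraHom := by
  classical
  haveI : Nontrivial V := hirr.1
  haveI hsimple : IsSimpleModule (MonoidAlgebra F G) π.asModule := isSimple π hirr
  set R := MonoidAlgebra F G
  -- semisimplicity of M itself
  haveI hssM : IsSemisimpleModule R π.asModule := by
    apply IsSemisimpleModule.of_sSup_simples_eq_top
    have htop : IsSimpleModule R (⊤ : Submodule R π.asModule) :=
      IsSimpleModule.congr Submodule.topEquiv
    exact top_unique (le_sSup htop)
  set n := Module.finrank F V
  let b := Module.finBasis F V
  -- semisimplicity of the n-fold power
  haveI hss : IsSemisimpleModule R (Fin n → π.asModule) := by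
    apply isSemisimpleModule_of_isSemisimpleModule_submodule'
      (p := fun j : Fin n => LinearMap.range (LinearMap.single R (fun _ : Fin n => π.asModule) j))
    · intro j
      have hinj : Function.Injective (LinearMap.single R (fun _ : Fin n => π.asModule) j) := by
        rw [LinearMap.coe_single]
        exact Pi.single_injective j
      exact IsSemisimpleModule.congr (LinearEquiv.ofInjective _ hinj).symm
    · exact LinearMap.iSup_range_single R _
  -- the cyclic submodule generated by the basis tuple
  let vv : Fin n → π.asModule := fun i => b i
  let N : Submodule R (Fin n → π.asModule) := Submodule.span R {vv}
  obtain ⟨N', hN'⟩ := exists_isCompl N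
  let pr := Submodule.projectionOnto N N' hN'
  let P : (Fin n → π.asModule) →ₗ[R] (Fin n → π.asModule) := N.subtype.comp pr
  have hPmem : ∀ y, P y ∈ N := fun y => (pr y).2
  have hPv : P vv = vv := by
    have hvN : vv ∈ N := Submodule.mem_span_singleton_self vv
    show (pr vv : Fin n → π.asModule) = vv
    have := Submodule.projectionOnto_apply_left hN' ⟨vv, hvN⟩
    rw [show ((⟨vv, hvN⟩ : N) : Fin n → π.asModule) = vv from rfl] at this
    rw [this]
  -- matrix entries of P are scalars
  let fm : Fin n → Fin n → (π.asModule →ₗ[R] π.asModule) := fun i j =>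
    (LinearMap.proj i).comp (P.comp (LinearMap.single R (fun _ : Fin n => π.asModule) j))
  choose cm hcm using fun i j => schur π hirr (fm i j)
  have hPexp : ∀ (y : Fin n → π.asModule) (i : Fin n), P y i = ∑ j, fm i j (y j) := by
    intro y i
    have hy : y = ∑ j, LinearMap.single R (fun _ : Fin n => π.asModule) j (y j) := by
      symm
      calc ∑ j, LinearMap.single R (fun _ : Fin n => π.asModule) j (y j)
          = ∑ j, Pi.single j (y j) := by simp [LinearMap.coe_single]
        _ = y := Finset.univ_sum_single y
    conv_lhs => rw [hy]
    rw [map_sum, Finset.sum_apply]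
    exact Finset.sum_congr rfl fun j _ => rfl
  have hcommA : ∀ (A : Module.End F V) (x : Fin n → π.asModule) (i : Fin n),
      P (fun j => A (x j)) i = A (P x i) := by
    intro A x i
    refine (hPexp _ i).trans ?_
    refine Eq.trans ?_ (congrArg A (hPexp x i).symm)
    calc @id V (∑ j, fm i j (A (x j)))
        = ∑ j, A (cm i j • x j) := by
          refine Finset.sum_congr rfl fun j _ => ?_
          refine (hcm i j _).trans ?_
          exact (map_smul A _ _).symm
      _ = A (∑ j, cm i j • x j) := (map_sum A _ _).symm
      _ = A (∑ j, fm i j (x j)) := by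
          congr 1
          exact Finset.sum_congr rfl fun j _ => (hcm i j (x j)).symm
  -- conclude
  intro A
  let y : Fin n → π.asModule := fun i => A (vv i)
  have hy : P y = y := by
    funext i
    have := hcommA A vv i
    rw [hPv] at this
    exact this
  have hyN : y ∈ N := by rw [← hy]; exact hPmem y
  obtain ⟨r, hr⟩ := Submodule.mem_span_singleton.mp hyN
  refine ⟨r, ?_⟩
  apply b.ext
  intro i
  have h1 : (r • vv) i = y i := by rw [hr]
  have h2 : (r • vv) i = r • vv i := rfl
  have h3 : (r • vv i : π.asModule) = π.asAlgebraHom r (vv i : V) := rfl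
  show π.asAlgebraHom r (b i) = A (b i)
  rw [show (b i : V) = (vv i : V) from rfl, ← h3, h2.symm.trans h1]

/-- Burnside, in the form of finite linear combinations of the `π g`. -/
lemma burnside' [Fintype G] (π : Representation F G V) (hirr : π.IsIrreducible')
    (A : Module.End F V) : ∃ c : G → F, ∑ g : G, c g • (π g : Module.End F V) = A := by
  classical
  obtain ⟨r, hr⟩ := burnside π hirr A
  refine ⟨fun g => r.coeff g, ?_⟩
  rw [← hr]
  have hrsum : r = ∑ g : G, MonoidAlgebra.single g (r.coeff g) := by
    rw [← Finsupp.sum_fintype r.coeff MonoidAlgebra.single (fun g => by ext; simp)]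
    exact (MonoidAlgebra.sum_coeff_single r).symm
  conv_rhs => rw [hrsum]
  rw [map_sum]
  exact Finset.sum_congr rfl fun g _ => (asAlgebraHom_single π g (r.coeff g)).symm

end Stmt0Aux

/-- matrix coefficients invariant under an anti-involution force
linear dependence of the two vectors. -/
theorem stmt0 {G F V : Type*} [Group G] [Fintype G] [Field F] [IsAlgClosed F]
    [AddCommGroup V] [Module F V] [FiniteDimensional F V]
    (π : Representation F G V) (hirr : π.IsIrreducible')
    (σ : G → G) (hanti : ∀ g h : G, σ (g * h) = σ h * σ g) (hinv : ∀ g, σ (σ g) = g)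
    (v₁ v₂ : V) (φ : Module.Dual F V) (hφ : φ ≠ 0)
    (h1 : ∀ g : G, φ (π g v₁) = φ (π (σ g) v₁))
    (h2 : ∀ g : G, φ (π g v₂) = φ (π (σ g) v₂)) :
    ¬ LinearIndependent F ![v₁, v₂] := by
  classical
  intro hLI
  have hv₁ : v₁ ≠ 0 := by have := hLI.ne_zero 0; simpa using this
  have hv₂ : v₂ ≠ 0 := by have := hLI.ne_zero 1; simpa using this
  -- the joint kernel of the matrix coefficients of φ is trivial
  have hzero : ∀ w : V, (∀ g : G, φ (π g w) = 0) → w = 0 := by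
    intro w hw
    let U : Submodule F V :=
      { carrier := {w : V | ∀ g : G, φ (π g w) = 0}
        add_mem' := fun ha hb g => by simp [map_add, ha g, hb g]
        zero_mem' := fun g => by simp
        smul_mem' := fun c x hx g => by simp [map_smul, hx g] }
    have hU : ∀ g : G, ∀ u ∈ U, π g u ∈ U := by
      intro g u hu h
      have : π h (π g u) = π (h * g) u := by rw [map_mul]; rfl
      rw [this]
      exact hu _
    rcases hirr.2 U hU with hbot | htop
    · have : w ∈ U := hw
      rw [hbot] at this
      simpa using this
    · exfalso
      apply hφ
      ext v
      have hv : v ∈ U := htop ▸ Submodule.mem_top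
      have := hv 1
      simpa using this
  -- the orbit of a nonzero vector spans
  have horbit : ∀ v : V, v ≠ 0 → ∀ u : V,
      u ∈ Submodule.span F (Set.range fun g : G => π g v) := by
    intro v hv u
    set U := Submodule.span F (Set.range fun g : G => π g v) with hUdef
    have hU : ∀ g : G, ∀ x ∈ U, π g x ∈ U := by
      intro g x hx
      induction hx using Submodule.span_induction with
      | mem y hy =>
        obtain ⟨k, rfl⟩ := hy
        apply Submodule.subset_span
        exact ⟨g * k, by simp [map_mul]⟩
      | zero => simp
      | add a b _ _ ha hb => rw [map_add]; exact U.add_mem ha hb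
      | smul c a _ ha => rw [map_smul]; exact U.smul_mem c ha
    rcases hirr.2 U hU with hbot | htop
    · exfalso
      apply hv
      have : v ∈ U := Submodule.subset_span ⟨1, by simp⟩
      rw [hbot] at this
      simpa using this
    · rw [htop]; trivial
  -- get the rank-one operator as a combination of the π g
  obtain ⟨cb, hcb⟩ := Stmt0Aux.burnside' π hirr (LinearMap.smulRight φ v₁)
  set Bop : Module.End F V := ∑ g : G, cb g • (π g : Module.End F V) with hBop
  set D : Module.End F V := ∑ g : G, cb g • (π (σ g) : Module.End F V) with hD
  have hBapp : ∀ x : V, Bop x = φ x • v₁ := by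
    intro x
    rw [hcb]
    rfl
  -- the key exchange identity coming from σ-invariance applied to products g k h
  have L1 : ∀ (v : V), (∀ g : G, φ (π g v) = φ (π (σ g) v)) → ∀ g h : G,
      φ (π g (Bop (π h v))) = φ (π (σ h) (D (π (σ g) v))) := by
    intro v hv g h
    have lhs : φ (π g (Bop (π h v))) = ∑ k : G, cb k * φ (π (g * k * h) v) := by
      rw [hBop, LinearMap.sum_apply, map_sum, map_sum]
      refine Finset.sum_congr rfl fun k _ => ?_
      rw [LinearMap.smul_apply, map_smul, map_smul, smul_eq_mul]
      congr 2
      simp [map_mul]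
    have rhs : φ (π (σ h) (D (π (σ g) v))) = ∑ k : G, cb k * φ (π (σ h * σ k * σ g) v) := by
      rw [hD, LinearMap.sum_apply, map_sum, map_sum]
      refine Finset.sum_congr rfl fun k _ => ?_
      rw [LinearMap.smul_apply, map_smul, map_smul, smul_eq_mul]
      congr 2
      simp [map_mul]
    rw [lhs, rhs]
    refine Finset.sum_congr rfl fun k _ => ?_
    congr 1
    rw [hv (g * k * h)]
    congr 2
    rw [hanti (g * k) h, hanti g k, mul_assoc]
  -- D agrees with Bop on the orbit of v₁, hence everywhere
  have hDorb : ∀ g : G, D (π g v₁) = Bop (π g v₁) := by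
    intro g
    have key : ∀ h : G, φ (π h (D (π g v₁) - Bop (π g v₁))) = 0 := by
      intro h
      have hL := L1 v₁ h1 (σ g) (σ h)
      rw [hinv, hinv] at hL
      -- hL : φ (π (σ g) (Bop (π (σ h) v₁))) = φ (π h (D (π g v₁)))
      have hlhs : φ (π (σ g) (Bop (π (σ h) v₁))) = φ (π h v₁) * φ (π g v₁) := by
        rw [hBapp, map_smul, map_smul, smul_eq_mul, ← h1, ← h1]
      have hrhs : φ (π h (Bop (π g v₁))) = φ (π g v₁) * φ (π h v₁) := by
        rw [hBapp, map_smul, map_smul, smul_eq_mul]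
      rw [map_sub, map_sub, ← hL, hlhs, hrhs, mul_comm]
      ring
    have := hzero _ key
    exact sub_eq_zero.mp this
  have hDB : ∀ u : V, D u = Bop u := by
    intro u
    have hu := horbit v₁ hv₁ u
    induction hu using Submodule.span_induction with
    | mem y hy => obtain ⟨g, rfl⟩ := hy; exact hDorb g
    | zero => simp
    | add a b _ _ ha hb => rw [map_add, map_add, ha, hb]
    | smul c a _ ha => rw [map_smul, map_smul, ha]
  -- the proportionality identity
  have key : ∀ g h : G, φ (π h v₂) * φ (π g v₁) = φ (π g v₂) * φ (π h v₁) := by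
    intro g h
    have hL := L1 v₂ h2 g h
    rw [hDB] at hL
    have hlhs : φ (π g (Bop (π h v₂))) = φ (π h v₂) * φ (π g v₁) := by
      rw [hBapp, map_smul, map_smul, smul_eq_mul]
    have hrhs : φ (π (σ h) (Bop (π (σ g) v₂))) = φ (π g v₂) * φ (π h v₁) := by
      rw [hBapp, map_smul, map_smul, smul_eq_mul, ← h2, ← h1]
    rw [hlhs, hrhs] at hL
    exact hL
  -- conclude linear dependence
  have hex : ∃ h₀ : G, φ (π h₀ v₂) ≠ 0 := by
    by_contra hcon
    push_neg at hcon
    exact hv₂ (hzero v₂ hcon)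
  obtain ⟨h₀, hh₀⟩ := hex
  set k : F := φ (π h₀ v₁) / φ (π h₀ v₂) with hk
  have hg : ∀ g : G, φ (π g (v₁ - k • v₂)) = 0 := by
    intro g
    have hkey := key g h₀
    have expand : φ (π g (v₁ - k • v₂)) = φ (π g v₁) - k * φ (π g v₂) := by
      rw [map_sub, map_sub, map_smul, map_smul, smul_eq_mul]
    rw [expand, hk]
    field_simp
    linear_combination hkey
  have hsub : v₁ - k • v₂ = 0 := hzero _ hg
  have hne : ∀ a : F, a • v₂ ≠ v₁ := by
    have := (linearIndependent_fin2.mp hLI).2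
    simpa using this
  exact hne k (sub_eq_zero.mp hsub).symm
end

section
/- (Gelfand trick) Let H < G be finite groups and σ an anti-involution of G such that σ(HgH) = HgH for every g ∈ G. Then over an algebraically closed field of characteristic zero, (G,H) is a Gelfand pair: for every irreducible representation π of G, dim π^H ≤ 1. -/
set_option linter.unusedSectionVars false
namespace GelfandAux
open scoped Classical

variable {G F : Type*} [Group G] [Fintype G] [Field F]

noncomputable def conv (f₁ f₂ : G → F) : G → F := fun x => ∑ y : G, f₁ y * f₂ (y⁻¹ * x)

variable {V : Type*} [AddCommGroup V] [Module F V]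

noncomputable def Phi (π : Representation F G V) (f : G → F) : Module.End F V :=
  ∑ g : G, f g • (π g)

lemma Phi_apply (π : Representation F G V) (f : G → F) (v : V) :
    Phi π f v = ∑ g : G, f g • π g v := by
  simp [Phi]

lemma Phi_conv (π : Representation F G V) (f₁ f₂ : G → F) :
    Phi π (conv f₁ f₂) = Phi π f₁ * Phi π f₂ := by
  have hr : Phi π f₁ * Phi π f₂ = ∑ y : G, ∑ b : G, (f₁ y * f₂ b) • (π (y * b) : Module.End F V) := by
    unfold Phi
    rw [Finset.sum_mul]
    refine Finset.sum_congr rfl fun y _ => ?_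
    rw [Finset.mul_sum]
    refine Finset.sum_congr rfl fun b _ => ?_
    rw [smul_mul_smul_comm, map_mul]
  rw [hr]
  unfold Phi conv
  simp_rw [Finset.sum_smul]
  rw [Finset.sum_comm]
  refine Finset.sum_congr rfl fun y _ => ?_
  refine Fintype.sum_equiv (Equiv.mulLeft y⁻¹) _ _ fun b => ?_
  rw [Equiv.coe_mulLeft, mul_inv_cancel_left]

lemma conv_linv {H : Subgroup G} {f₁ : G → F} (f₂ : G → F)
    (h₁ : ∀ h ∈ H, ∀ x, f₁ (h * x) = f₁ x) {h : G} (hh : h ∈ H) (x : G) :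
    conv f₁ f₂ (h * x) = conv f₁ f₂ x := by
  unfold conv
  refine Fintype.sum_equiv (Equiv.mulLeft h⁻¹) _ _ fun z => ?_
  have e : (h⁻¹ * z)⁻¹ * x = z⁻¹ * (h * x) := by group
  rw [Equiv.coe_mulLeft, e, h₁ h⁻¹ (inv_mem hh) z]

lemma conv_rinv {H : Subgroup G} (f₁ : G → F) {f₂ : G → F}
    (h₂ : ∀ h ∈ H, ∀ x, f₂ (x * h) = f₂ x) {h : G} (hh : h ∈ H) (x : G) :
    conv f₁ f₂ (x * h) = conv f₁ f₂ x := by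
  unfold conv
  refine Finset.sum_congr rfl fun y _ => ?_
  rw [← mul_assoc, h₂ h hh]

variable {H : Subgroup G} {σ : G → G}

lemma sigma_fix (hcosets : ∀ g : G, σ '' DoubleCoset.doubleCoset g (H : Set G) (H : Set G)
      = DoubleCoset.doubleCoset g (H : Set G) (H : Set G)) {f : G → F}
    (hl : ∀ h ∈ H, ∀ x, f (h * x) = f x) (hr : ∀ h ∈ H, ∀ x, f (x * h) = f x) (x : G) :
    f (σ x) = f x := by
  have hx : σ x ∈ DoubleCoset.doubleCoset x (H : Set G) (H : Set G) := by
    rw [← hcosets x]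
    exact ⟨x, DoubleCoset.mem_doubleCoset_self H H x, rfl⟩
  obtain ⟨a, ha, b, hb, hab⟩ := DoubleCoset.mem_doubleCoset.mp hx
  rw [hab, hr b hb, hl a ha]

lemma sigma_one (hanti : ∀ g h : G, σ (g * h) = σ h * σ g) : σ 1 = 1 := by
  have := hanti 1 1
  rw [mul_one] at this
  exact (right_eq_mul.mp this)

lemma sigma_inv (hanti : ∀ g h : G, σ (g * h) = σ h * σ g) (y : G) : σ y⁻¹ = (σ y)⁻¹ := by
  have h1 : σ (y * y⁻¹) = σ y⁻¹ * σ y := hanti y y⁻¹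
  rw [mul_inv_cancel, sigma_one hanti] at h1
  exact eq_inv_of_mul_eq_one_left h1.symm

lemma conv_comm (hanti : ∀ g h : G, σ (g * h) = σ h * σ g) (hinv : ∀ g, σ (σ g) = g)
    (hcosets : ∀ g : G, σ '' DoubleCoset.doubleCoset g (H : Set G) (H : Set G)
      = DoubleCoset.doubleCoset g (H : Set G) (H : Set G))
    {f₁ f₂ : G → F}
    (h₁l : ∀ h ∈ H, ∀ x, f₁ (h * x) = f₁ x) (h₁r : ∀ h ∈ H, ∀ x, f₁ (x * h) = f₁ x)
    (h₂l : ∀ h ∈ H, ∀ x, f₂ (h * x) = f₂ x) (h₂r : ∀ h ∈ H, ∀ x, f₂ (x * h) = f₂ x) :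
    conv f₁ f₂ = conv f₂ f₁ := by
  have hfix₁ := sigma_fix (σ := σ) hcosets h₁l h₁r
  have hfix₂ := sigma_fix (σ := σ) hcosets h₂l h₂r
  funext x
  have key : conv f₁ f₂ x = conv f₂ f₁ (σ x) := by
    unfold conv
    refine Fintype.sum_equiv
      ((Function.Involutive.toPerm σ hinv).trans ((Equiv.inv G).trans (Equiv.mulLeft (σ x))))
      _ _ fun y => ?_
    simp only [Equiv.trans_apply, Function.Involutive.coe_toPerm, Equiv.inv_apply,
      Equiv.coe_mulLeft]
    show f₁ y * f₂ (y⁻¹ * x) = f₂ (σ x * (σ y)⁻¹) * f₁ ((σ x * (σ y)⁻¹)⁻¹ * σ x)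
    have e1 : (σ x * (σ y)⁻¹)⁻¹ * σ x = σ y := by group
    have e2 : σ x * (σ y)⁻¹ = σ (y⁻¹ * x) := by rw [hanti, sigma_inv hanti]
    rw [e1, e2, hfix₂, hfix₁, mul_comm]
  rw [key]
  exact sigma_fix hcosets (fun h hh z => conv_linv f₁ h₂l hh z)
    (fun h hh z => conv_rinv f₂ h₁r hh z) x


noncomputable def eH (H : Subgroup G) : G → F := fun x => if x ∈ H then 1 else 0

noncomputable def delta (g : G) : G → F := fun x => if x = g then 1 else 0

lemma eH_linv : ∀ h ∈ H, ∀ x, (eH H : G → F) (h * x) = eH H x := by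
  intro h hh x
  simp [eH, H.mul_mem_cancel_left hh]

lemma eH_rinv : ∀ h ∈ H, ∀ x, (eH H : G → F) (x * h) = eH H x := by
  intro h hh x
  simp [eH, H.mul_mem_cancel_right hh]

lemma Phi_delta (π : Representation F G V) (g : G) : Phi π (delta g) = π g := by
  simp [Phi, delta, ite_smul]

lemma T_comm (hanti : ∀ g h : G, σ (g * h) = σ h * σ g) (hinv : ∀ g, σ (σ g) = g)
    (hcosets : ∀ g : G, σ '' DoubleCoset.doubleCoset g (H : Set G) (H : Set G)
      = DoubleCoset.doubleCoset g (H : Set G) (H : Set G))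
    (π : Representation F G V) (g g' : G) :
    (Phi π (eH H) * π g * Phi π (eH H)) * (Phi π (eH H) * π g' * Phi π (eH H))
      = (Phi π (eH H) * π g' * Phi π (eH H)) * (Phi π (eH H) * π g * Phi π (eH H)) := by
  have hTg : ∀ a : G, Phi π (eH H) * π a * Phi π (eH H)
      = Phi π (conv (eH H) (conv (delta a) (eH H))) := by
    intro a
    rw [Phi_conv, Phi_conv, Phi_delta, mul_assoc]
  have hfl : ∀ a : G, ∀ h ∈ H, ∀ x,
      conv (eH H) (conv (delta a) (eH H)) (h * x)
        = conv (eH H) (conv (delta a) (eH H)) x :=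
    fun a h hh x => conv_linv (conv (delta a) (eH H)) (eH_linv (F := F)) hh x
  have hfr : ∀ a : G, ∀ h ∈ H, ∀ x,
      conv (eH H) (conv (delta a) (eH H)) (x * h)
        = conv (eH H) (conv (delta a) (eH H)) x :=
    fun a h hh x => conv_rinv (eH H)
      (fun h' hh' y => conv_rinv (delta a) (eH_rinv (F := F)) hh' y) hh x
  rw [hTg, hTg, ← Phi_conv, ← Phi_conv,
    conv_comm hanti hinv hcosets (hfl g) (hfr g) (hfl g') (hfr g')]

lemma Phi_eH_mem (π : Representation F G V) (v : V) :
    Phi π (eH (F := F) H) v ∈ Representation.invariants (π.comp H.subtype) := by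
  rw [Representation.mem_invariants]
  intro h
  show π (h : G) (Phi π (eH H) v) = Phi π (eH H) v
  rw [Phi_apply, map_sum]
  simp_rw [map_smul]
  refine Fintype.sum_equiv (Equiv.mulLeft (h : G)) _ _ fun g => ?_
  rw [Equiv.coe_mulLeft, eH_linv (h : G) h.2 g, map_mul]
  rfl

lemma Phi_eH_of_mem (π : Representation F G V) {v : V}
    (hv : v ∈ Representation.invariants (π.comp H.subtype)) :
    Phi π (eH (F := F) H) v
      = (((Finset.univ.filter (fun g => g ∈ H)).card : F)) • v := by
  rw [Phi_apply]
  simp only [eH, ite_smul, one_smul, zero_smul]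
  rw [← Finset.sum_filter]
  have hterm : ∀ g ∈ Finset.univ.filter (fun g : G => g ∈ H), π g v = v := by
    intro g hg
    have hgH : g ∈ H := (Finset.mem_filter.mp hg).2
    exact (Representation.mem_invariants (π.comp H.subtype) v).mp hv ⟨g, hgH⟩
  rw [Finset.sum_congr rfl hterm, Finset.sum_const, ← Nat.cast_smul_eq_nsmul F]

end GelfandAux

/-- Gelfand trick: an anti-involution preserving all `H` double
cosets makes `(G,H)` a Gelfand pair over an algebraically closed field of
characteristic zero. -/
theorem stmt2 {G F : Type*} [Group G] [Fintype G] [Field F] [IsAlgClosed F] [CharZero F]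
    (H : Subgroup G)
    (σ : G → G) (hanti : ∀ g h : G, σ (g * h) = σ h * σ g) (hinv : ∀ g, σ (σ g) = g)
    (hcosets : ∀ g : G, σ '' DoubleCoset.doubleCoset g (H : Set G) (H : Set G)
        = DoubleCoset.doubleCoset g (H : Set G) (H : Set G)) :
    ∀ (V : Type*) [AddCommGroup V] [Module F V] [FiniteDimensional F V]
      (π : Representation F G V), π.IsIrreducible' →
      Module.finrank F (Representation.invariants (V := V) (π.comp H.subtype)) ≤ 1 := by
  classical
  intro V _ _ _ π hirr
  set W := Representation.invariants (V := V) (π.comp H.subtype) with hWdef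
  by_cases hbot : W = ⊥
  · rw [hbot]
    simp
  set n : ℕ := (Finset.univ.filter (fun g : G => g ∈ H)).card with hn_def
  have hn : (n : F) ≠ 0 := by
    have h1 : (1 : G) ∈ Finset.univ.filter (fun g : G => g ∈ H) :=
      Finset.mem_filter.mpr ⟨Finset.mem_univ 1, H.one_mem⟩
    exact Nat.cast_ne_zero.mpr (Finset.card_ne_zero_of_mem h1)
  set P : Module.End F V := GelfandAux.Phi π (GelfandAux.eH H) with hP_def
  set T : G → Module.End F V := fun g => P * π g * P with hT_def
  have hPmem : ∀ v : V, P v ∈ W := fun v => GelfandAux.Phi_eH_mem π v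
  have hPinv : ∀ v ∈ W, P v = (n : F) • v := fun v hv => GelfandAux.Phi_eH_of_mem π hv
  have hTapp : ∀ g : G, ∀ v : V, T g v = P (π g (P v)) := by
    intro g v
    simp [hT_def, Module.End.mul_apply]
  have hTmem : ∀ g : G, ∀ v : V, T g v ∈ W := by
    intro g v; rw [hTapp]; exact hPmem _
  have hPT : ∀ g : G, ∀ v ∈ W, P (π g v) = (n : F)⁻¹ • T g v := by
    intro g v hv
    rw [hTapp, hPinv v hv, map_smul, map_smul, smul_smul, inv_mul_cancel₀ hn, one_smul]
  have hcomm : ∀ g g' : G, T g * T g' = T g' * T g := fun g g' =>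
    GelfandAux.T_comm hanti hinv hcosets π g g'
  -- Claim 1: the `P (π g w)` span everything in `W`, for any nonzero `w ∈ W`.
  have claim1 : ∀ w, w ∈ W → w ≠ 0 →
      W ≤ Submodule.span F (Set.range fun g : G => P (π g w)) := by
    intro w hw hw0
    set U : Submodule F V := Submodule.span F (Set.range fun g : G => π g w) with hU_def
    have hUinv : ∀ g : G, ∀ v ∈ U, π g v ∈ U := by
      intro g v hv
      induction hv using Submodule.span_induction with
      | mem x hx =>
        obtain ⟨g', rfl⟩ := hx
        exact Submodule.subset_span ⟨g * g', by simp [map_mul]⟩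
      | zero => rw [map_zero]; exact U.zero_mem
      | add x y _ _ hx hy => rw [map_add]; exact U.add_mem hx hy
      | smul c x _ hx => rw [map_smul]; exact U.smul_mem c hx
    have hUtop : U = ⊤ := by
      rcases hirr.2 U hUinv with h | h
      · exfalso
        have hwU : w ∈ U := Submodule.subset_span ⟨1, by simp⟩
        rw [h, Submodule.mem_bot] at hwU
        exact hw0 hwU
      · exact h
    intro v hv
    have hvU : v ∈ U := hUtop ▸ Submodule.mem_top
    have hPv : P v ∈ Submodule.map P U := Submodule.mem_map_of_mem hvU
    rw [hU_def, Submodule.map_span, ← Set.range_comp] at hPv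
    have hv2 : v = (n : F)⁻¹ • P v := by
      rw [hPinv v hv, smul_smul, inv_mul_cancel₀ hn, one_smul]
    rw [hv2]
    exact Submodule.smul_mem _ _ hPv
  -- Claim 2: every `T g` acts on `W` by a scalar.
  have claim2 : ∀ g : G, ∃ c : F, ∀ v ∈ W, T g v = c • v := by
    intro g
    haveI : Nontrivial ↥W := Submodule.nontrivial_iff_ne_bot.mpr hbot
    set Tr : Module.End F ↥W := (T g).restrict (p := W) (q := W) (fun v _ => hTmem g v)
      with hTr_def
    obtain ⟨c, hc⟩ := Module.End.exists_eigenvalue Tr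
    obtain ⟨w, hw⟩ := hc.exists_hasEigenvector
    have hw0 : (w : V) ≠ 0 := fun h => hw.2 (Subtype.coe_injective (by simpa using h))
    have hTw : T g (w : V) = c • (w : V) := by
      have h2 := congrArg (Subtype.val) hw.apply_eq_smul
      simpa [hTr_def, LinearMap.restrict_apply] using h2
    refine ⟨c, fun v hv => ?_⟩
    set E : Submodule F V := W ⊓ LinearMap.ker (T g - c • (1 : Module.End F V)) with hE_def
    have hmemE : ∀ u : V, u ∈ E ↔ u ∈ W ∧ T g u = c • u := by
      intro u
      simp [hE_def, LinearMap.mem_ker, LinearMap.sub_apply, sub_eq_zero]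
    have hwE : (w : V) ∈ E := (hmemE _).mpr ⟨w.2, hTw⟩
    have hTE : ∀ g' : G, ∀ u ∈ E, T g' u ∈ E := by
      intro g' u hu
      obtain ⟨hu1, hu2⟩ := (hmemE u).mp hu
      refine (hmemE _).mpr ⟨hTmem g' u, ?_⟩
      have h1 : T g (T g' u) = T g' (T g u) := by
        rw [← Module.End.mul_apply, hcomm g g', Module.End.mul_apply]
      rw [h1, hu2, map_smul]
    have hWE : W ≤ E := by
      refine le_trans (claim1 (w : V) w.2 hw0) (Submodule.span_le.mpr ?_)
      rintro x ⟨g', rfl⟩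
      show P (π g' (w : V)) ∈ (E : Set V)
      rw [hPT g' _ w.2]
      exact E.smul_mem _ (hTE g' _ hwE)
    exact ((hmemE v).mp (hWE hv)).2
  -- Conclusion
  obtain ⟨w, hw, hw0⟩ := Submodule.exists_mem_ne_zero_of_ne_bot hbot
  have hWle : W ≤ Submodule.span F {w} := by
    refine le_trans (claim1 w hw hw0) (Submodule.span_le.mpr ?_)
    rintro x ⟨g, rfl⟩
    obtain ⟨c, hc⟩ := claim2 g
    show P (π g w) ∈ (Submodule.span F {w} : Set V)
    rw [hPT g w hw, hc w hw]
    exact Submodule.smul_mem _ _ (Submodule.smul_mem _ _ (Submodule.mem_span_singleton_self w))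
  calc Module.finrank F W ≤ Module.finrank F (Submodule.span F {w}) :=
        Submodule.finrank_mono hWle
    _ = 1 := finrank_span_singleton hw0
end

section
/- For every prime power q and every n ≥ 1, and every pair of nonzero vectors φ, v ∈ (F_q)ⁿ, there exists an invertible symmetric matrix B ∈ GL_n(F_q) such that Bφ = v. -/
open Matrix

lemma isUnit_of_mulVec_inj {n : ℕ} {F : Type*} [Field F] {M : Matrix (Fin n) (Fin n) F}
    (h : ∀ x, M.mulVec x = 0 → x = 0) : IsUnit M := by
  rw [Matrix.isUnit_iff_isUnit_det, isUnit_iff_ne_zero]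
  intro hd
  rw [← Matrix.exists_mulVec_eq_zero_iff] at hd
  obtain ⟨x, hx, hx0⟩ := hd
  exact hx (h x hx0)

lemma lemB {n : ℕ} [NeZero n] {F : Type*} [Field F] {u : Fin n → F} (hu : u ≠ 0) :
    ∃ B : Matrix (Fin n) (Fin n) F, IsUnit B ∧ B.transpose = B ∧
      B.mulVec (Pi.single 0 1) = u := by
  obtain ⟨k, hk⟩ : ∃ k, u k ≠ 0 := by
    by_contra h; push_neg at h; exact hu (funext h)
  by_cases h0 : u 0 ≠ 0
  · -- case u 0 ≠ 0
    set B : Matrix (Fin n) (Fin n) F :=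
      Matrix.of (fun i j => u i * u j * (u 0)⁻¹) +
        Matrix.diagonal (fun i => if i = 0 then 0 else 1) with hB
    have hrowval : ∀ (x : Fin n → F) (i : Fin n), B.mulVec x i =
        u i * (u 0)⁻¹ * (∑ j, u j * x j) + (if i = 0 then 0 else 1) * x i := by
      intro x i
      rw [hB, Matrix.add_mulVec, Pi.add_apply, Matrix.mulVec_diagonal]
      congr 1
      show ∑ j, (u i * u j * (u 0)⁻¹) * x j = _
      rw [Finset.mul_sum]
      exact Finset.sum_congr rfl (fun j _ => by ring)
    refine ⟨B, ?_, ?_, ?_⟩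
    · apply isUnit_of_mulVec_inj
      intro x hx
      have hrow : ∀ i, u i * (u 0)⁻¹ * (∑ j, u j * x j) +
          (if i = 0 then 0 else 1) * x i = 0 := by
        intro i; rw [← hrowval, hx]; rfl
      have hS : (∑ j, u j * x j) = 0 := by
        have h := hrow 0
        rw [if_pos rfl, zero_mul, add_zero] at h
        rcases mul_eq_zero.mp h with h' | h'
        · rcases mul_eq_zero.mp h' with h'' | h''
          · exact absurd h'' h0
          · exact absurd h'' (inv_ne_zero h0)
        · exact h'
      have hxi : ∀ i, i ≠ 0 → x i = 0 := by
        intro i hi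
        have h := hrow i
        rw [hS] at h
        simpa [hi] using h
      have hx0 : x 0 = 0 := by
        have h : (∑ j, u j * x j) = u 0 * x 0 := by
          rw [Finset.sum_eq_single 0]
          · intro b _ hb; simp [hxi b hb]
          · simp
        rw [hS] at h
        rcases mul_eq_zero.mp h.symm with h' | h'
        · exact absurd h' h0
        · exact h'
      funext i
      by_cases hi : i = 0
      · simpa [hi] using hx0
      · simpa using hxi i hi
    · apply Matrix.ext
      intro i j
      rcases eq_or_ne i j with rfl | h
      · rfl
      · simp only [Matrix.transpose_apply, hB, Matrix.add_apply, Matrix.of_apply,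
          Matrix.diagonal_apply, if_neg h, if_neg (Ne.symm h)]
        ring
    · funext i
      rw [hrowval]
      have h1 : (∑ j, u j * (Pi.single 0 1 : Fin n → F) j) = u 0 := by
        simp [Pi.single_apply]
      rw [h1]
      rcases eq_or_ne i 0 with rfl | hi
      · field_simp
        simp
      · simp only [if_neg hi, Pi.single_apply, if_neg (Ne.symm hi), mul_zero, add_zero]
        field_simp
  · -- case u 0 = 0
    push_neg at h0
    have hk0 : k ≠ 0 := by rintro rfl; exact hk h0
    set B : Matrix (Fin n) (Fin n) F :=
      Matrix.of (fun i j => (if j = 0 then u i else 0) + (if i = 0 then u j else 0)) +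
        Matrix.diagonal (fun i => if i = 0 ∨ i = k then 0 else 1) with hB
    have hrowval : ∀ (x : Fin n → F) (i : Fin n), B.mulVec x i =
        u i * x 0 + (if i = 0 then (∑ j, u j * x j) else 0) +
          (if i = 0 ∨ i = k then 0 else 1) * x i := by
      intro x i
      rw [hB, Matrix.add_mulVec, Pi.add_apply, Matrix.mulVec_diagonal]
      congr 1
      show ∑ j, ((if j = 0 then u i else 0) + (if i = 0 then u j else 0)) * x j = _
      have : ∀ j, ((if j = 0 then u i else 0) + (if i = 0 then u j else 0)) * x j
          = (if j = 0 then u i * x j else 0) + (if i = 0 then u j * x j else 0) := by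
        intro j; by_cases hj : j = 0 <;> by_cases hi : i = 0 <;> simp [hj, hi] <;> ring
      rw [Finset.sum_congr rfl (fun j _ => this j), Finset.sum_add_distrib]
      congr 1
      · simp
      · rcases eq_or_ne i 0 with rfl | hi
        · simp
        · simp [hi]
    refine ⟨B, ?_, ?_, ?_⟩
    · apply isUnit_of_mulVec_inj
      intro x hx
      have hrow : ∀ i, u i * x 0 + (if i = 0 then (∑ j, u j * x j) else 0) +
          (if i = 0 ∨ i = k then 0 else 1) * x i = 0 := by
        intro i; rw [← hrowval, hx]; rfl
      have hx0 : x 0 = 0 := by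
        have h := hrow k
        rw [if_neg hk0, add_zero, if_pos (Or.inr rfl), zero_mul, add_zero] at h
        rcases mul_eq_zero.mp h with h' | h'
        · exact absurd h' hk
        · exact h'
      have hxi : ∀ i, i ≠ 0 → i ≠ k → x i = 0 := by
        intro i hi hik
        have h := hrow i
        have hor : ¬(i = 0 ∨ i = k) := by tauto
        rw [if_neg hi, add_zero, if_neg hor, one_mul, hx0, mul_zero, zero_add] at h
        exact h
      have hS : (∑ j, u j * x j) = 0 := by
        have h := hrow 0
        simpa [hx0, h0] using h
      have hxk : x k = 0 := by
        have h : (∑ j, u j * x j) = u k * x k := by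
          rw [Finset.sum_eq_single k]
          · intro b _ hb
            rcases eq_or_ne b 0 with rfl | hb0
            · simp [hx0]
            · simp [hxi b hb0 hb]
          · simp
        rw [hS] at h
        rcases mul_eq_zero.mp h.symm with h' | h'
        · exact absurd h' hk
        · exact h'
      funext i
      rcases eq_or_ne i 0 with rfl | hi
      · exact hx0
      rcases eq_or_ne i k with rfl | hik
      · exact hxk
      · simpa using hxi i hi hik
    · apply Matrix.ext
      intro i j
      rcases eq_or_ne i j with rfl | h
      · rfl
      · simp only [Matrix.transpose_apply, hB, Matrix.add_apply, Matrix.of_apply,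
          Matrix.diagonal_apply, if_neg h, if_neg (Ne.symm h)]
        ring
    · funext i
      rw [hrowval]
      have h1 : (∑ j, u j * (Pi.single 0 1 : Fin n → F) j) = u 0 := by
        simp [Pi.single_apply]
      rw [h1]
      rcases eq_or_ne i 0 with rfl | hi
      · simp [h0]
      · simp [Pi.single_apply, hi, Ne.symm hi]

lemma lemA {n : ℕ} [NeZero n] {F : Type*} [Field F] {φ : Fin n → F} (hφ : φ ≠ 0) :
    ∃ P : Matrix (Fin n) (Fin n) F, IsUnit P ∧ P.mulVec φ = Pi.single 0 1 := by
  obtain ⟨k, hk⟩ : ∃ k, φ k ≠ 0 := by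
    by_contra h; push_neg at h; exact hφ (funext h)
  set σ : Equiv.Perm (Fin n) := Equiv.swap 0 k with hσ
  set P : Matrix (Fin n) (Fin n) F := Matrix.of (fun i j =>
      if i = 0 then (if j = k then (φ k)⁻¹ else 0)
      else ((if j = σ i then 1 else 0) - (if j = k then φ (σ i) * (φ k)⁻¹ else 0))) with hP
  have hrowval : ∀ (x : Fin n → F) (i : Fin n), P.mulVec x i =
      if i = 0 then (φ k)⁻¹ * x k else x (σ i) - φ (σ i) * (φ k)⁻¹ * x k := by
    intro x i
    show ∑ j, P i j * x j = _
    rcases eq_or_ne i 0 with rfl | hi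
    · rw [if_pos rfl]
      rw [Finset.sum_eq_single k]
      · simp [hP]
      · intro b _ hb; simp [hP, hb]
      · simp
    · rw [if_neg hi]
      have : ∀ j, P i j * x j =
          (if j = σ i then x j else 0) - (if j = k then φ (σ i) * (φ k)⁻¹ * x j else 0) := by
        intro j
        have hPij : P i j = (if j = σ i then (1:F) else 0) - if j = k then φ (σ i) * (φ k)⁻¹ else 0 := by
          rw [hP]; exact if_neg hi
        rw [hPij, sub_mul]
        congr 1
        · by_cases h1 : j = σ i <;> simp [h1]
        · by_cases h2 : j = k <;> simp [h2]
      rw [Finset.sum_congr rfl (fun j _ => this j), Finset.sum_sub_distrib]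
      simp
  have hswap : ∀ i : Fin n, σ (σ i) = i := fun i => Equiv.swap_apply_self 0 k i
  refine ⟨P, ?_, ?_⟩
  · apply isUnit_of_mulVec_inj
    intro x hx
    have hrow : ∀ i, (if i = 0 then (φ k)⁻¹ * x k
        else x (σ i) - φ (σ i) * (φ k)⁻¹ * x k) = 0 := by
      intro i; rw [← hrowval, hx]; rfl
    have hxk : x k = 0 := by
      have h := hrow 0
      rw [if_pos rfl] at h
      rcases mul_eq_zero.mp h with h' | h'
      · exact absurd h' (inv_ne_zero hk)
      · exact h'
    funext j
    rcases eq_or_ne j k with rfl | hjk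
    · exact hxk
    have hσj : σ j ≠ 0 := by
      intro h
      have : j = σ 0 := by rw [← h, hswap]
      rw [hσ] at this
      simp [Equiv.swap_apply_left] at this
      exact hjk this
    have h := hrow (σ j)
    rw [if_neg hσj, hswap, hxk, mul_zero, sub_zero] at h
    exact h
  · funext i
    rw [hrowval]
    rcases eq_or_ne i 0 with rfl | hi
    · rw [if_pos rfl, inv_mul_cancel₀ hk]
      simp
    · rw [if_neg hi, mul_assoc, inv_mul_cancel₀ hk, mul_one, sub_self]
      simp [Pi.single_apply, Ne.symm hi]


/-- over any finite field, for any two nonzero vectors `φ, v`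
there is an invertible symmetric matrix `B` with `B φ = v`. -/
theorem stmt6 (F : Type*) [Field F] [Fintype F] (n : ℕ) (hn : 1 ≤ n)
    (φ v : Fin n → F) (hφ : φ ≠ 0) (hv : v ≠ 0) :
    ∃ B : Matrix (Fin n) (Fin n) F, IsUnit B ∧ B.transpose = B ∧ B.mulVec φ = v := by
  haveI : NeZero n := ⟨by omega⟩
  obtain ⟨P, hP, hPφ⟩ := lemA hφ
  have hPtdet : IsUnit P.transpose.det := by
    rw [Matrix.det_transpose]
    exact (Matrix.isUnit_iff_isUnit_det P).mp hP
  have hPt : IsUnit P.transpose := (Matrix.isUnit_iff_isUnit_det _).mpr hPtdet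
  set u : Fin n → F := (P.transpose)⁻¹.mulVec v with hu
  have hptinv : P.transpose * (P.transpose)⁻¹ = 1 := Matrix.mul_nonsing_inv _ hPtdet
  have hPtu : P.transpose.mulVec u = v := by
    rw [hu, Matrix.mulVec_mulVec, hptinv, Matrix.one_mulVec]
  have hune : u ≠ 0 := by
    intro h
    rw [h] at hPtu
    rw [Matrix.mulVec_zero] at hPtu
    exact hv hPtu.symm
  obtain ⟨B', hB', hB'symm, hB'e⟩ := lemB hune
  refine ⟨P.transpose * B' * P, (hPt.mul hB').mul hP, ?_, ?_⟩
  · rw [Matrix.transpose_mul, Matrix.transpose_mul, Matrix.transpose_transpose, hB'symm,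
      Matrix.mul_assoc]
  · rw [Matrix.mul_assoc, ← Matrix.mulVec_mulVec, ← Matrix.mulVec_mulVec, hPφ, hB'e, hPtu]
end

section
/- For n ≥ 1 and q a prime power, every matrix A' ∈ GL_{n+1}(F_q) whose upper-left n×n block A has rank n, and whose last-column vector v and last-row vector φ (of length n) are both nonzero, lies in the same GL_n(F_q)-double coset as its transpose: there exist B, C ∈ GL_n(F_q) with diag(B,1)·A'·diag(C,1) = (A')ᵀ. -/
open Matrix

section Aux

variable {F : Type*} [Field F] {V W : Type*} [AddCommGroup V] [Module F V]
  [AddCommGroup W] [Module F W]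

/-- Glue two linear equivalences along complement decompositions. -/
noncomputable def glueEquiv (p p' : Submodule F V) (q q' : Submodule F W)
    (hp : IsCompl p p') (hq : IsCompl q q') (e₁ : p ≃ₗ[F] q) (e₂ : p' ≃ₗ[F] q') :
    V ≃ₗ[F] W :=
  (Submodule.prodEquivOfIsCompl p p' hp).symm ≪≫ₗ (e₁.prodCongr e₂) ≪≫ₗ
    Submodule.prodEquivOfIsCompl q q' hq

lemma glueEquiv_apply_left (p p' : Submodule F V) (q q' : Submodule F W)
    (hp : IsCompl p p') (hq : IsCompl q q') (e₁ : p ≃ₗ[F] q) (e₂ : p' ≃ₗ[F] q')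
    (a : p) : glueEquiv p p' q q' hp hq e₁ e₂ (a : V) = (e₁ a : W) := by
  simp only [glueEquiv, LinearEquiv.trans_apply,
    Submodule.prodEquivOfIsCompl_symm_apply_left]
  rw [LinearEquiv.prodCongr_apply]
  simp [Submodule.coe_prodEquivOfIsCompl']

lemma glueEquiv_apply_right (p p' : Submodule F V) (q q' : Submodule F W)
    (hp : IsCompl p p') (hq : IsCompl q q') (e₁ : p ≃ₗ[F] q) (e₂ : p' ≃ₗ[F] q')
    (b : p') : glueEquiv p p' q q' hp hq e₁ e₂ (b : V) = (e₂ b : W) := by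
  simp only [glueEquiv, LinearEquiv.trans_apply,
    Submodule.prodEquivOfIsCompl_symm_apply_right]
  rw [LinearEquiv.prodCongr_apply]
  simp [Submodule.coe_prodEquivOfIsCompl']

/-- The span-to-span equivalence sending `x` to `y`. -/
noncomputable def spanEquiv {x : V} {y : W} (hx : x ≠ 0) (hy : y ≠ 0) :
    (Submodule.span F {x}) ≃ₗ[F] (Submodule.span F {y}) :=
  (LinearEquiv.toSpanNonzeroSingleton F V x hx).symm ≪≫ₗ
    LinearEquiv.toSpanNonzeroSingleton F W y hy

lemma spanEquiv_apply_self {x : V} {y : W} (hx : x ≠ 0) (hy : y ≠ 0) :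
    spanEquiv (F := F) hx hy ⟨x, Submodule.mem_span_singleton_self x⟩ =
      ⟨y, Submodule.mem_span_singleton_self y⟩ := by
  simp only [spanEquiv, LinearEquiv.trans_apply]
  rw [← LinearEquiv.toSpanNonzeroSingleton_one F V x hx, LinearEquiv.symm_apply_apply]
  exact LinearEquiv.toSpanNonzeroSingleton_one F W y hy

/-- Any nonzero vector can be mapped to any nonzero vector by a linear equivalence
between spaces of equal finite dimension. -/
lemma exists_linearEquiv_map_eq [FiniteDimensional F V] [FiniteDimensional F W]
    (h : Module.finrank F V = Module.finrank F W) {x : V} {y : W}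
    (hx : x ≠ 0) (hy : y ≠ 0) : ∃ e : V ≃ₗ[F] W, e x = y := by
  obtain ⟨p', hp⟩ := (Submodule.span F {x}).exists_isCompl
  obtain ⟨q', hq⟩ := (Submodule.span F {y}).exists_isCompl
  have h1 := Submodule.finrank_add_eq_of_isCompl hp
  have h2 := Submodule.finrank_add_eq_of_isCompl hq
  rw [finrank_span_singleton hx] at h1
  rw [finrank_span_singleton hy] at h2
  have hpq : Module.finrank F p' = Module.finrank F q' := by omega
  refine ⟨glueEquiv _ p' _ q' hp hq (spanEquiv hx hy) (LinearEquiv.ofFinrankEq _ _ hpq), ?_⟩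
  have := glueEquiv_apply_left _ p' _ q' hp hq (spanEquiv hx hy)
    (LinearEquiv.ofFinrankEq _ _ hpq) ⟨x, Submodule.mem_span_singleton_self x⟩
  rw [spanEquiv_apply_self] at this
  exact this

lemma isCompl_ker_span {f : V →ₗ[F] F} {p : V} (hp : f p ≠ 0) :
    IsCompl (LinearMap.ker f) (Submodule.span F {p}) := by
  constructor
  · rw [disjoint_iff_inf_le]
    rintro z ⟨hz1, hz2⟩
    obtain ⟨t, rfl⟩ := Submodule.mem_span_singleton.mp hz2
    have : t * f p = 0 := by
      simpa using (LinearMap.mem_ker.mp hz1)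
    rcases mul_eq_zero.mp this with h | h
    · simp [h]
    · exact absurd h hp
  · rw [codisjoint_iff_le_sup]
    intro z _
    have hz : z - (f z / f p) • p ∈ LinearMap.ker f := by
      simp [LinearMap.mem_ker, div_mul_cancel₀ _ hp]
    have hsp : (f z / f p) • p ∈ Submodule.span F {p} :=
      Submodule.smul_mem _ _ (Submodule.mem_span_singleton_self p)
    have : z = (z - (f z / f p) • p) + (f z / f p) • p := by abel
    rw [this]
    exact Submodule.add_mem_sup hz hsp

lemma surjective_of_ne_zero {f : V →ₗ[F] F} (hf : f ≠ 0) : Function.Surjective f := by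
  obtain ⟨p, hp⟩ := DFunLike.ne_iff.mp hf
  simp only [LinearMap.zero_apply] at hp
  intro a
  exact ⟨(a / f p) • p, by simp [div_mul_cancel₀ _ hp]⟩

/-- The key abstract lemma: linear equivalence mapping a prescribed nonzero vector to
another and pulling one nonzero functional back to another, assuming the pairings agree. -/
lemma exists_linearEquiv_functional [FiniteDimensional F V] [FiniteDimensional F W]
    (h : Module.finrank F V = Module.finrank F W) {x : V} {y : W}
    (hx : x ≠ 0) (hy : y ≠ 0) {f : V →ₗ[F] F} {g : W →ₗ[F] F}
    (hf : f ≠ 0) (hg : g ≠ 0) (hfg : f x = g y) :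
    ∃ e : V ≃ₗ[F] W, e x = y ∧ ∀ z, g (e z) = f z := by
  have hkerf : Module.finrank F (LinearMap.ker f) + 1 = Module.finrank F V := by
    have := LinearMap.finrank_range_add_finrank_ker f
    rw [(LinearMap.range_eq_top.mpr (surjective_of_ne_zero hf))] at this
    simpa [add_comm] using this
  have hkerg : Module.finrank F (LinearMap.ker g) + 1 = Module.finrank F W := by
    have := LinearMap.finrank_range_add_finrank_ker g
    rw [(LinearMap.range_eq_top.mpr (surjective_of_ne_zero hg))] at this
    simpa [add_comm] using this
  by_cases hc : f x = 0
  · -- x ∈ ker f, y ∈ ker g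
    have hxk : x ∈ LinearMap.ker f := hc
    have hyk : y ∈ LinearMap.ker g := by rw [LinearMap.mem_ker, ← hfg, hc]
    obtain ⟨p, hp⟩ := DFunLike.ne_iff.mp hf
    obtain ⟨q, hq⟩ := DFunLike.ne_iff.mp hg
    simp only [LinearMap.zero_apply] at hp hq
    -- rescale
    set p₁ : V := (f p)⁻¹ • p with hp₁def
    set q₁ : W := (g q)⁻¹ • q with hq₁def
    have hfp₁ : f p₁ = 1 := by simp [hp₁def, inv_mul_cancel₀ hp]
    have hgq₁ : g q₁ = 1 := by simp [hq₁def, inv_mul_cancel₀ hq]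
    have hfp₁' : f p₁ ≠ 0 := by rw [hfp₁]; exact one_ne_zero
    have hgq₁' : g q₁ ≠ 0 := by rw [hgq₁]; exact one_ne_zero
    have hp₁0 : p₁ ≠ 0 := fun h0 => hfp₁' (by rw [h0, map_zero])
    have hq₁0 : q₁ ≠ 0 := fun h0 => hgq₁' (by rw [h0, map_zero])
    have hcpl₁ := isCompl_ker_span hfp₁'
    have hcpl₂ := isCompl_ker_span hgq₁'
    -- equivalence of kernels sending x to y
    have hxk0 : (⟨x, hxk⟩ : LinearMap.ker f) ≠ 0 := by
      intro h0; exact hx (by simpa using congrArg Subtype.val h0)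
    have hyk0 : (⟨y, hyk⟩ : LinearMap.ker g) ≠ 0 := by
      intro h0; exact hy (by simpa using congrArg Subtype.val h0)
    obtain ⟨e₁, he₁⟩ := exists_linearEquiv_map_eq (F := F)
      (by omega : Module.finrank F (LinearMap.ker f) = Module.finrank F (LinearMap.ker g))
      hxk0 hyk0
    refine ⟨glueEquiv _ _ _ _ hcpl₁ hcpl₂ e₁ (spanEquiv hp₁0 hq₁0), ?_, ?_⟩
    · have := glueEquiv_apply_left _ _ _ _ hcpl₁ hcpl₂ e₁ (spanEquiv hp₁0 hq₁0) ⟨x, hxk⟩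
      rw [he₁] at this
      exact this
    · intro z
      obtain ⟨⟨a, b⟩, hab⟩ := (Submodule.prodEquivOfIsCompl _ _ hcpl₁).surjective z
      rw [Submodule.coe_prodEquivOfIsCompl'] at hab
      subst hab
      rw [map_add, map_add, glueEquiv_apply_left, glueEquiv_apply_right]
      have hga : g ((e₁ a : W)) = 0 := (e₁ a).2
      have hfa : f (a : V) = 0 := a.2
      obtain ⟨t, ht⟩ := Submodule.mem_span_singleton.mp b.2
      have hb : (b : V) = t • p₁ := ht.symm
      have : spanEquiv (F := F) hp₁0 hq₁0 b = ⟨t • q₁,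
          Submodule.smul_mem _ _ (Submodule.mem_span_singleton_self q₁)⟩ := by
        have hb' : b = t • ⟨p₁, Submodule.mem_span_singleton_self p₁⟩ := by
          ext; simpa using hb
        rw [hb', _root_.map_smul, spanEquiv_apply_self]
        rfl
      rw [this]
      simp [hga, hfa, hb, hfp₁, hgq₁]
  · -- f x ≠ 0 : use span x ⊕ ker f
    have hgy : g y ≠ 0 := by rw [← hfg]; exact hc
    have hcpl₁ := (isCompl_ker_span hc).symm
    have hcpl₂ := (isCompl_ker_span hgy).symm
    obtain ⟨e₂⟩ := FiniteDimensional.nonempty_linearEquiv_of_finrank_eq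
      (R := F) (M := LinearMap.ker f) (M' := LinearMap.ker g) (by omega)
    refine ⟨glueEquiv _ _ _ _ hcpl₁ hcpl₂ (spanEquiv hx hy) e₂, ?_, ?_⟩
    · have := glueEquiv_apply_left _ _ _ _ hcpl₁ hcpl₂ (spanEquiv hx hy) e₂
        ⟨x, Submodule.mem_span_singleton_self x⟩
      rw [spanEquiv_apply_self] at this
      exact this
    · intro z
      obtain ⟨⟨a, b⟩, hab⟩ := (Submodule.prodEquivOfIsCompl _ _ hcpl₁).surjective z
      rw [Submodule.coe_prodEquivOfIsCompl'] at hab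
      subst hab
      rw [map_add, map_add, glueEquiv_apply_left, glueEquiv_apply_right]
      have hgb : g ((e₂ b : W)) = 0 := (e₂ b).2
      have hfb : f (b : V) = 0 := b.2
      obtain ⟨t, ht⟩ := Submodule.mem_span_singleton.mp a.2
      have ha : (a : V) = t • x := ht.symm
      have : spanEquiv (F := F) hx hy a = ⟨t • y,
          Submodule.smul_mem _ _ (Submodule.mem_span_singleton_self y)⟩ := by
        have ha' : a = t • ⟨x, Submodule.mem_span_singleton_self x⟩ := by
          ext; simpa using ha
        rw [ha', _root_.map_smul, spanEquiv_apply_self]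
        rfl
      rw [this]
      simp [hgb, hfb, ha, hfg]

/-- dot product with a fixed vector on the left, as a linear map. -/
noncomputable def dotLeft {n : ℕ} (u : Fin n → F) : (Fin n → F) →ₗ[F] F where
  toFun z := u ⬝ᵥ z
  map_add' z₁ z₂ := by simp [dotProduct_add]
  map_smul' t z := by simp [dotProduct_smul]

lemma dotLeft_ne_zero {n : ℕ} {u : Fin n → F} (hu : u ≠ 0) : dotLeft u ≠ 0 := by
  obtain ⟨i, hi⟩ := Function.ne_iff.mp hu
  simp only [Pi.zero_apply] at hi
  intro h0
  have : dotLeft u (Pi.single i 1) = 0 := by rw [h0]; rfl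
  rw [show dotLeft u (Pi.single i 1) = u ⬝ᵥ Pi.single i 1 from rfl,
    dotProduct_single, mul_one] at this
  exact hi this

/-- The key matrix lemma: given nonzero vectors with matching pairing, there is an
invertible matrix with prescribed column action and row action. -/
lemma exists_matrix_mulVec_vecMul {n : ℕ} (v φ' w u : Fin n → F)
    (hv : v ≠ 0) (hφ : φ' ≠ 0) (hw : w ≠ 0) (hu : u ≠ 0)
    (hc : u ⬝ᵥ v = w ⬝ᵥ φ') :
    ∃ B : Matrix (Fin n) (Fin n) F, IsUnit B ∧ B *ᵥ v = φ' ∧ w ᵥ* B = u := by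
  obtain ⟨e, hex, hefg⟩ := exists_linearEquiv_functional (F := F)
    (rfl : Module.finrank F (Fin n → F) = Module.finrank F (Fin n → F))
    hv hφ (dotLeft_ne_zero hu) (dotLeft_ne_zero hw) hc
  refine ⟨LinearMap.toMatrix' (e : (Fin n → F) →ₗ[F] (Fin n → F)), ?_, ?_, ?_⟩
  · have h1 : LinearMap.toMatrix' (e : (Fin n → F) →ₗ[F] (Fin n → F)) *
        LinearMap.toMatrix' (e.symm : (Fin n → F) →ₗ[F] (Fin n → F)) =
        (1 : Matrix (Fin n) (Fin n) F) := by
      rw [← LinearMap.toMatrix'_comp]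
      have : (e : (Fin n → F) →ₗ[F] _).comp (e.symm : (Fin n → F) →ₗ[F] _) =
          LinearMap.id := by
        ext z : 1
        simp
      rw [this, LinearMap.toMatrix'_id]
    exact (Matrix.isUnit_iff_isUnit_det _).mpr (Matrix.isUnit_det_of_right_inverse h1)
  · have : ∀ z, LinearMap.toMatrix' (e : (Fin n → F) →ₗ[F] _) *ᵥ z = e z := by
      intro z
      rw [← Matrix.toLin'_apply, Matrix.toLin'_toMatrix']
      rfl
    rw [this v, hex]
  · funext i
    have h1 : (w ᵥ* LinearMap.toMatrix' (e : (Fin n → F) →ₗ[F] _)) ⬝ᵥ Pi.single i 1 =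
        w ⬝ᵥ (LinearMap.toMatrix' (e : (Fin n → F) →ₗ[F] _) *ᵥ Pi.single i 1) := by
      rw [Matrix.dotProduct_mulVec]
    have h2 : LinearMap.toMatrix' (e : (Fin n → F) →ₗ[F] _) *ᵥ Pi.single i 1 =
        e (Pi.single i 1) := by
      rw [← Matrix.toLin'_apply, Matrix.toLin'_toMatrix']
      rfl
    have h3 : w ⬝ᵥ e (Pi.single i 1) = u ⬝ᵥ Pi.single i 1 := hefg (Pi.single i 1)
    rw [h2, h3] at h1
    rw [dotProduct_single, mul_one] at h1
    rw [dotProduct_single, mul_one] at h1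
    exact h1

end Aux

/-- an invertible `(n+1)×(n+1)` matrix whose upper-left `n×n`
block has full rank `n` and whose last column part `v` and last row part `φ`
are both nonzero lies in the same `GL_n`-double coset as its transpose. -/
theorem stmt8 (F : Type*) [Field F] [Fintype F] (n : ℕ) (hn : 1 ≤ n)
    (A' : Matrix (Fin n ⊕ Unit) (Fin n ⊕ Unit) F) (hA' : IsUnit A')
    (hrank : (A'.toBlocks₁₁).rank = n)
    (hv : A'.toBlocks₁₂ ≠ 0) (hφ : A'.toBlocks₂₁ ≠ 0) :
    ∃ B C : Matrix (Fin n) (Fin n) F, IsUnit B ∧ IsUnit C ∧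
      Matrix.fromBlocks B 0 0 1 * A' * Matrix.fromBlocks C 0 0 1 = A'ᵀ := by
  classical
  set A : Matrix (Fin n) (Fin n) F := A'.toBlocks₁₁ with hAdef
  -- A is invertible
  have hA : IsUnit A := by
    rw [← Matrix.mulVec_injective_iff_isUnit]
    have hsurj : Function.Surjective A.mulVecLin := by
      rw [← LinearMap.range_eq_top]
      apply Submodule.eq_top_of_finrank_eq
      rw [← Matrix.rank, hrank, Module.finrank_pi]
      simp
    exact LinearMap.injective_iff_surjective.mpr hsurj
  have hAdet : IsUnit A.det := (Matrix.isUnit_iff_isUnit_det A).mp hA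
  have hATdet : IsUnit Aᵀ.det := by rwa [Matrix.det_transpose]
  set va : Fin n → F := fun i => A'.toBlocks₁₂ i () with hvadef
  set φa : Fin n → F := fun j => A'.toBlocks₂₁ () j with hφadef
  have hva : va ≠ 0 := by
    intro h0
    apply hv
    ext i j
    have := congrFun h0 i
    simpa [hvadef] using this
  have hφa : φa ≠ 0 := by
    intro h0
    apply hφ
    ext i j
    have := congrFun h0 j
    simpa [hφadef] using this
  set w : Fin n → F := A⁻¹ *ᵥ va with hwdef
  set u : Fin n → F := φa ᵥ* A⁻¹ with hudef
  have hAw : A *ᵥ w = va := by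
    rw [hwdef, Matrix.mulVec_mulVec, Matrix.mul_nonsing_inv _ hAdet, Matrix.one_mulVec]
  have huA : u ᵥ* A = φa := by
    rw [hudef, Matrix.vecMul_vecMul, Matrix.nonsing_inv_mul _ hAdet, Matrix.vecMul_one]
  have hw : w ≠ 0 := by
    intro h0
    apply hva
    rw [← hAw, h0, Matrix.mulVec_zero]
  have hu : u ≠ 0 := by
    intro h0
    apply hφa
    rw [← huA, h0, Matrix.zero_vecMul]
  have hc : u ⬝ᵥ va = w ⬝ᵥ φa := by
    rw [hudef, hwdef]
    rw [← Matrix.dotProduct_mulVec]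
    rw [dotProduct_comm]
  obtain ⟨B, hB, hBv, hBw⟩ := exists_matrix_mulVec_vecMul va φa w u hva hφa hw hu hc
  have hBdet : IsUnit B.det := (Matrix.isUnit_iff_isUnit_det B).mp hB
  refine ⟨B, A⁻¹ * B⁻¹ * Aᵀ, hB, ?_, ?_⟩
  · refine ((Matrix.isUnit_nonsing_inv_iff.mpr hA).mul
      (Matrix.isUnit_nonsing_inv_iff.mpr hB)).mul ?_
    rwa [Matrix.isUnit_iff_isUnit_det, Matrix.det_transpose, ← Matrix.isUnit_iff_isUnit_det]
  · set C : Matrix (Fin n) (Fin n) F := A⁻¹ * B⁻¹ * Aᵀ with hCdef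
    set vM : Matrix (Fin n) Unit F := A'.toBlocks₁₂ with hvMdef
    set φM : Matrix Unit (Fin n) F := A'.toBlocks₂₁ with hφMdef
    set dM : Matrix Unit Unit F := A'.toBlocks₂₂ with hdMdef
    have hA' : A' = Matrix.fromBlocks A vM φM dM := (Matrix.fromBlocks_toBlocks A').symm
    rw [hA']
    rw [Matrix.fromBlocks_transpose, Matrix.fromBlocks_multiply, Matrix.fromBlocks_multiply]
    have hBAC : B * A * C = Aᵀ := by
      rw [hCdef, ← Matrix.mul_assoc, ← Matrix.mul_assoc,
        Matrix.mul_nonsing_inv_cancel_right _ _ hAdet,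
        Matrix.mul_nonsing_inv _ hBdet, Matrix.one_mul]
    have hBvM : B * vM = φMᵀ := by
      ext i j
      have := congrFun hBv i
      simp only [Matrix.mulVec, dotProduct] at this
      simp only [Matrix.mul_apply, Matrix.transpose_apply]
      rw [show j = () from rfl] at *
      simpa [hvadef, hφadef, hvMdef, hφMdef] using this
    have hφC : φM * C = vMᵀ := by
      have hkey : φa ᵥ* C = va := by
        have h1 : φa ᵥ* C = ((φa ᵥ* A⁻¹) ᵥ* B⁻¹) ᵥ* Aᵀ := by
          rw [hCdef, Matrix.mul_assoc, ← Matrix.vecMul_vecMul, ← Matrix.vecMul_vecMul]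
        rw [h1, ← hudef, ← hBw, Matrix.vecMul_vecMul w B B⁻¹,
          Matrix.mul_nonsing_inv _ hBdet,
          Matrix.vecMul_one, Matrix.vecMul_transpose, hAw]
      ext i j
      have := congrFun hkey j
      simp only [Matrix.vecMul, dotProduct] at this
      simp only [Matrix.mul_apply, Matrix.transpose_apply]
      rw [show i = () from rfl] at *
      simpa [hvadef, hφadef, hvMdef, hφMdef] using this
    have hdM : dM = dMᵀ := by
      ext i j
      rw [show i = () from rfl, show j = () from rfl]
      rfl
    simp only [Matrix.zero_mul, Matrix.mul_zero, add_zero, zero_add,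
      Matrix.one_mul, Matrix.mul_one]
    rw [hBAC, hBvM, hφC, ← hdM]
end

section
/- Let q be an odd prime power and embed O_n(F_q) into O_{n+1}(F_q) as the stabilizer of the last basis vector for the standard quadratic form. Then every O_n(F_q)-double coset in O_{n+1}(F_q) is preserved setwise by the transpose map. -/
open Matrix

section Aux

variable {K : Type*} [Field K] {ι : Type*} [Fintype ι] [DecidableEq ι]

private lemma vecMulVec_mul_self (w : ι → K) :
    vecMulVec w w * vecMulVec w w = (w ⬝ᵥ w) • vecMulVec w w := by
  ext i j
  simp only [mul_apply, vecMulVec_apply, Matrix.smul_apply, smul_eq_mul, dotProduct,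
    Finset.sum_mul]
  exact Finset.sum_congr rfl fun k _ => by ring

private lemma vecMulVec_mulVec (w u : ι → K) :
    (vecMulVec w w) *ᵥ u = (w ⬝ᵥ u) • w := by
  funext i
  simp only [mulVec, dotProduct, vecMulVec_apply, Pi.smul_apply, smul_eq_mul,
    Finset.sum_mul]
  exact Finset.sum_congr rfl fun k _ => by ring

private lemma vecMulVec_transpose (w : ι → K) :
    (vecMulVec w w)ᵀ = vecMulVec w w := by
  ext i j
  simp [vecMulVec_apply, mul_comm]

/-- existence of a symmetric orthogonal matrix swapping two unit vectors. -/
private lemma exists_swap_mat (h2 : (2 : K) ≠ 0) (e v : ι → K)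
    (he : e ⬝ᵥ e = 1) (hv : v ⬝ᵥ v = 1) :
    ∃ σ : Matrix ι ι K, σᵀ = σ ∧ σ * σ = 1 ∧ σ *ᵥ e = v ∧ σ *ᵥ v = e := by
  classical
  set t : K := e ⬝ᵥ v with ht
  have hvc : v ⬝ᵥ e = t := by rw [dotProduct_comm]
  -- helper: properties of ε • (1 - (2/c) • vecMulVec w w)
  have main : ∀ (w : ι → K) (c ε : K), c ≠ 0 → w ⬝ᵥ w = c → ε * ε = 1 →
      (ε • ((1 : Matrix ι ι K) - (2/c) • vecMulVec w w))ᵀ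
        = ε • ((1 : Matrix ι ι K) - (2/c) • vecMulVec w w) ∧
      (ε • ((1 : Matrix ι ι K) - (2/c) • vecMulVec w w))
        * (ε • ((1 : Matrix ι ι K) - (2/c) • vecMulVec w w)) = 1 ∧
      ∀ u, (ε • ((1 : Matrix ι ι K) - (2/c) • vecMulVec w w)) *ᵥ u
        = ε • (u - (2/c * (w ⬝ᵥ u)) • w) := by
    intro w c ε hc hw hε
    refine ⟨?_, ?_, ?_⟩
    · rw [transpose_smul, transpose_sub, transpose_one, transpose_smul,
        vecMulVec_transpose]
    · have hW := vecMulVec_mul_self w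
      rw [hw] at hW
      rw [smul_mul_smul_comm, hε]
      have key : ((2/c) • vecMulVec w w) * ((2/c) • vecMulVec w w)
          = (2/c + 2/c) • vecMulVec w w := by
        rw [smul_mul_assoc, mul_smul_comm, hW, smul_smul, smul_smul]
        congr 1
        field_simp
        ring
      rw [one_smul, mul_sub, sub_mul, sub_mul, key, add_smul]
      simp only [Matrix.one_mul, Matrix.mul_one]
      abel
    · intro u
      rw [smul_mulVec, sub_mulVec, one_mulVec, smul_mulVec,
        _root_.vecMulVec_mulVec, smul_smul]
  by_cases hT : t = 1
  · -- use w = e + v, c = 4, ε = -1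
    have hw : (e + v) ⬝ᵥ (e + v) = 4 := by
      rw [add_dotProduct, dotProduct_add, dotProduct_add, he, hv, hvc, ← ht, hT]
      norm_num
    have hc : (4 : K) ≠ 0 := by
      have : (4 : K) = 2 * 2 := by norm_num
      rw [this]; exact mul_ne_zero h2 h2
    obtain ⟨hsym, hsq, hmv⟩ := main (e + v) 4 (-1) hc hw (by norm_num)
    refine ⟨_, hsym, hsq, ?_, ?_⟩
    · rw [hmv e]
      have hwe : (e + v) ⬝ᵥ e = 2 := by
        rw [add_dotProduct, he, hvc, hT]; norm_num
      rw [hwe]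
      have : (2 / 4 * 2 : K) = 1 := by
        field_simp
        norm_num
      rw [this, one_smul]
      funext i; simp; try ring
    · rw [hmv v]
      have hwv : (e + v) ⬝ᵥ v = 2 := by
        rw [add_dotProduct, hv, ← ht, hT]; norm_num
      rw [hwv]
      have : (2 / 4 * 2 : K) = 1 := by
        field_simp
        norm_num
      rw [this, one_smul]
      funext i; simp; try ring
  · -- use w = e - v, c = 2 - 2t, ε = 1
    have hc : (2 - 2 * t : K) ≠ 0 := by
      have : (2 - 2 * t : K) = 2 * (1 - t) := by ring
      rw [this]
      exact mul_ne_zero h2 (sub_ne_zero.mpr fun h => hT h.symm)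
    have hw : (e - v) ⬝ᵥ (e - v) = 2 - 2 * t := by
      rw [sub_dotProduct, dotProduct_sub, dotProduct_sub, he, hv, hvc, ← ht]
      ring
    obtain ⟨hsym, hsq, hmv⟩ := main (e - v) (2 - 2 * t) 1 hc hw (by norm_num)
    refine ⟨_, hsym, hsq, ?_, ?_⟩
    · rw [hmv e]
      have hwe : (e - v) ⬝ᵥ e = 1 - t := by
        rw [sub_dotProduct, he, hvc]
      rw [hwe]
      have : (2 / (2 - 2 * t) * (1 - t) : K) = 1 := by field_simp; try ring
      rw [this, one_smul, one_smul]
      funext i; simp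
    · rw [hmv v]
      have hwv : (e - v) ⬝ᵥ v = t - 1 := by
        rw [sub_dotProduct, hv, ← ht]; try ring
      rw [hwv]
      have : (2 / (2 - 2 * t) * (t - 1) : K) = -1 := by field_simp; try ring
      rw [this, one_smul]
      funext i; simp; try ring

/-- the transpose (= inverse) of an orthogonal matrix lies in the same
double coset of the embedded smaller orthogonal group. -/
private lemma transpose_mem_coset {n : ℕ} (h2 : (2 : K) ≠ 0)
    (g : Matrix (Fin n ⊕ Unit) (Fin n ⊕ Unit) K) (hg : gᵀ * g = 1) :
    ∃ h : Matrix (Fin n) (Fin n) K, hᵀ * h = 1 ∧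
      gᵀ = fromBlocks h 0 0 1 * g * fromBlocks h 0 0 1 := by
  classical
  have hggt : g * gᵀ = 1 := mul_eq_one_comm.mpr hg
  set e : Fin n ⊕ Unit → K := Pi.single (Sum.inr ()) 1 with he_def
  have hee : e ⬝ᵥ e = 1 := by
    simp [he_def, dotProduct, Pi.single_apply]
  set v : Fin n ⊕ Unit → K := g *ᵥ e with hv_def
  have hgv : gᵀ *ᵥ v = e := by
    rw [hv_def, mulVec_mulVec, hg, one_mulVec]
  have hvv : v ⬝ᵥ v = 1 := by
    have h1 : v ⬝ᵥ v = (v ᵥ* g) ⬝ᵥ e := by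
      rw [hv_def, dotProduct_mulVec]
    have h2' : v ᵥ* g = gᵀ *ᵥ v := (mulVec_transpose g v).symm
    rw [h1, h2', hgv, hee]
  obtain ⟨σ, hsym, hsq, hσe, hσv⟩ := exists_swap_mat h2 e v hee hvv
  set a : Matrix (Fin n ⊕ Unit) (Fin n ⊕ Unit) K := gᵀ * σ with ha_def
  have hat : aᵀ = σ * g := by
    rw [ha_def, transpose_mul, transpose_transpose, hsym]
  have ha1 : aᵀ * a = 1 := by
    rw [hat, ha_def, Matrix.mul_assoc, ← Matrix.mul_assoc g, hggt,
      Matrix.one_mul, hsq]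
  have hae : a *ᵥ e = e := by
    rw [ha_def, ← mulVec_mulVec, hσe, hgv]
  have hate : aᵀ *ᵥ e = e := by
    rw [hat, ← mulVec_mulVec, ← hv_def, hσv]
  -- a is a block matrix
  have hcol : ∀ i, a i (Sum.inr ()) = e i := by
    intro i
    have := congrFun hae i
    simpa [mulVec, dotProduct, he_def, Pi.single_apply] using this
  have hrow : ∀ j, a (Sum.inr ()) j = e j := by
    intro j
    have := congrFun hate j
    simpa [mulVec, dotProduct, he_def, Pi.single_apply, transpose_apply]
      using this
  have hA : a = fromBlocks (a.toBlocks₁₁) 0 0 1 := by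
    ext i j
    rcases i with i | i <;> rcases j with j | j
    · rfl
    · cases j
      have := hcol (Sum.inl i)
      simpa [he_def, Pi.single_apply, fromBlocks] using this
    · cases i
      have := hrow (Sum.inl j)
      simpa [he_def, Pi.single_apply, fromBlocks] using this
    · cases i; cases j
      have := hrow (Sum.inr ())
      simpa [he_def, Pi.single_apply, fromBlocks, one_apply] using this
  refine ⟨a.toBlocks₁₁, ?_, ?_⟩
  · have hone : (1 : Matrix (Fin n ⊕ Unit) (Fin n ⊕ Unit) K).toBlocks₁₁ = 1 := by
      ext i j
      simp [toBlocks₁₁, one_apply, Sum.inl.injEq]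
    have this' := ha1
    rw [hA] at this'
    simp only [fromBlocks_transpose, fromBlocks_multiply, transpose_zero,
      transpose_one, Matrix.mul_zero, Matrix.zero_mul, Matrix.mul_one,
      Matrix.one_mul, add_zero, zero_add] at this'
    have h11 := congrArg Matrix.toBlocks₁₁ this'
    rw [hone] at h11
    simpa [toBlocks_fromBlocks₁₁] using h11
  · rw [← hA, ha_def]
    rw [Matrix.mul_assoc (gᵀ * σ) g, ← Matrix.mul_assoc g, hggt,
      Matrix.one_mul, Matrix.mul_assoc, hsq, Matrix.mul_one]

end Aux

/-- every double coset of the embedded `O_n(F_q)` in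
`O_{n+1}(F_q)` is preserved setwise by transpose (`q` odd). -/
theorem stmt13 (K : Type*) [Field K] [Fintype K] (hq : Odd (Fintype.card K)) (n : ℕ) :
    ∀ g : Matrix (Fin n ⊕ Unit) (Fin n ⊕ Unit) K, gᵀ * g = 1 →
      (fun x : Matrix (Fin n ⊕ Unit) (Fin n ⊕ Unit) K => xᵀ) ''
          {x | ∃ h₁ : Matrix (Fin n) (Fin n) K, h₁ᵀ * h₁ = 1 ∧
               ∃ h₂ : Matrix (Fin n) (Fin n) K, h₂ᵀ * h₂ = 1 ∧
               x = Matrix.fromBlocks h₁ 0 0 1 * g * Matrix.fromBlocks h₂ 0 0 1}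
        = {x | ∃ h₁ : Matrix (Fin n) (Fin n) K, h₁ᵀ * h₁ = 1 ∧
               ∃ h₂ : Matrix (Fin n) (Fin n) K, h₂ᵀ * h₂ = 1 ∧
               x = Matrix.fromBlocks h₁ 0 0 1 * g * Matrix.fromBlocks h₂ 0 0 1} := by
  intro g hg
  have h2 : (2 : K) ≠ 0 := by
    intro h
    have hchar : ringChar K = 2 := by
      have hdvd : ringChar K ∣ 2 := by
        have := (ringChar.spec K 2)
        rw [← this]; exact_mod_cast h
      rcases (Nat.prime_two.eq_one_or_self_of_dvd _ hdvd) with h1 | h1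
      · exact absurd h1 (CharP.ringChar_ne_one (R := K))
      · exact h1
    have := FiniteField.even_card_iff_char_two.mp hchar
    rw [Nat.odd_iff] at hq
    omega
  obtain ⟨h, hh, hgt⟩ := transpose_mem_coset h2 g hg
  have key : ∀ x, (∃ h₁ : Matrix (Fin n) (Fin n) K, h₁ᵀ * h₁ = 1 ∧
        ∃ h₂ : Matrix (Fin n) (Fin n) K, h₂ᵀ * h₂ = 1 ∧
        x = Matrix.fromBlocks h₁ 0 0 1 * g * Matrix.fromBlocks h₂ 0 0 1) →
      (∃ h₁ : Matrix (Fin n) (Fin n) K, h₁ᵀ * h₁ = 1 ∧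
        ∃ h₂ : Matrix (Fin n) (Fin n) K, h₂ᵀ * h₂ = 1 ∧
        xᵀ = Matrix.fromBlocks h₁ 0 0 1 * g * Matrix.fromBlocks h₂ 0 0 1) := by
    rintro x ⟨h₁, hh₁, h₂, hh₂, rfl⟩
    refine ⟨h₂ᵀ * h, ?_, h * h₁ᵀ, ?_, ?_⟩
    · rw [transpose_mul, transpose_transpose, Matrix.mul_assoc,
        ← Matrix.mul_assoc h₂, mul_eq_one_comm.mp hh₂, Matrix.one_mul, hh]
    · rw [transpose_mul, transpose_transpose, Matrix.mul_assoc,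
        ← Matrix.mul_assoc hᵀ]
      rw [show hᵀ * h * h₁ᵀ = h₁ᵀ by rw [hh, Matrix.one_mul]]
      exact mul_eq_one_comm.mp hh₁
    · rw [transpose_mul, transpose_mul, hgt]
      simp only [fromBlocks_transpose, transpose_zero, transpose_one]
      have e1 : fromBlocks h₂ᵀ 0 0 (1 : Matrix Unit Unit K) * fromBlocks h 0 0 1
          = fromBlocks (h₂ᵀ * h) 0 0 1 := by
        simp [fromBlocks_multiply]
      have e2 : fromBlocks h 0 0 (1 : Matrix Unit Unit K) * fromBlocks h₁ᵀ 0 0 1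
          = fromBlocks (h * h₁ᵀ) 0 0 1 := by
        simp [fromBlocks_multiply]
      rw [← e1, ← e2]
      simp only [Matrix.mul_assoc]
  ext x
  simp only [Set.mem_image, Set.mem_setOf_eq]
  constructor
  · rintro ⟨y, hy, rfl⟩
    exact key y hy
  · intro hx
    exact ⟨xᵀ, key x hx, transpose_transpose x⟩
end
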